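/- Let u(x) = ln(−ln|x|) for x ∈ ℝ² with 0 < |x| < 1/e, and let b(x) = −x/(|x|² ln|x|). Then for every such x, the function u is twice differentiable at x with gradient ∇u(x) = x/(|x|² ln|x|) and Laplacian Δu(x) = −1/(|x|² (ln|x|)²); consequently −Δu(x) + b(x)·∇u(x) = 0 for all x with 0 < |x| < 1/e. -/

import Mathlib

open MeasureTheory
open scoped ENNReal RealInnerProductSpace

noncomputable section

abbrev E2 : Type := EuclideanSpace ℝ (Fin 2)

/-- The drift `b(x) = -x/(|x|² ln|x|)`. -/
def bb (x : E2) : E2 := -((‖x‖ ^ 2 * Real.log ‖x‖)⁻¹) • x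

/-- The function `u(x) = ln(-ln|x|)`. -/
def uu (x : E2) : ℝ := Real.log (-Real.log ‖x‖)

/-- The gradient field `∇u(x) = x/(|x|² ln|x|)`. -/
def G (x : E2) : E2 := ((‖x‖ ^ 2 * Real.log ‖x‖)⁻¹) • x

/-- For `0 < |x| < 1/e`, `u(x) = ln(-ln|x|)` is twice differentiable at
`x` with gradient `∇u(x) = x/(|x|²ln|x|)` and Laplacian `Δu(x) = -1/(|x|²(ln|x|)²)`;
consequently `-Δu(x) + b(x)·∇u(x) = 0`. -/
theorem statement12 :
    ∀ x : E2, 0 < ‖x‖ → ‖x‖ < (Real.exp 1)⁻¹ →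
      HasGradientAt uu (G x) x ∧
      ∃ L : E2 →L[ℝ] E2, HasFDerivAt G L x ∧
        (∑ i, L (EuclideanSpace.single i (1 : ℝ)) i)
          = -(‖x‖ ^ 2 * Real.log ‖x‖ ^ 2)⁻¹ ∧
        -(∑ i, L (EuclideanSpace.single i (1 : ℝ)) i) + ⟪bb x, G x⟫ = 0 := by
  intro x hx hxe
  set r : ℝ := ‖x‖ with hr
  have hr0 : r ≠ 0 := ne_of_gt hx
  have hlr : Real.log r < -1 := by
    have h := Real.log_lt_log hx hxe
    simpa [Real.log_inv, Real.log_exp] using h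
  have hlr0 : Real.log r ≠ 0 := by linarith
  set s : ℝ := r ^ 2 with hs
  have hs0 : 0 < s := by positivity
  have hlogs : Real.log s = 2 * Real.log r := by
    rw [hs, Real.log_pow]; push_cast; ring
  have hlogs_ne : Real.log s ≠ 0 := by rw [hlogs]; intro h; apply hlr0; linarith
  have hsl_ne : s * Real.log s ≠ 0 := mul_ne_zero (ne_of_gt hs0) hlogs_ne
  -- norm sq derivative
  have hq : HasFDerivAt (fun y : E2 => ‖y‖ ^ 2) (2 • (innerSL ℝ x)) x :=
    (hasStrictFDerivAt_norm_sq x).hasFDerivAt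
  -- the scalar function φ
  set φ : ℝ → ℝ := fun t => 2 * (t * Real.log t)⁻¹ with hφdef
  have haux : ∀ a : ℝ, 2 * (2 * a)⁻¹ = a⁻¹ := by
    intro a
    rcases eq_or_ne a 0 with h | h
    · simp [h]
    · field_simp
  have hG_eq : G = fun y : E2 => φ (‖y‖ ^ 2) • y := by
    funext y
    unfold G
    congr 1
    rw [hφdef]
    simp only
    rw [Real.log_pow]
    rw [show (‖y‖ ^ 2 * (((2 : ℕ) : ℝ) * Real.log ‖y‖)) = 2 * (‖y‖ ^ 2 * Real.log ‖y‖) by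
      push_cast; ring]
    rw [haux]
  set φd : ℝ := 2 * (-(Real.log s + 1) / (s * Real.log s) ^ 2) with hφd
  have hφ : HasDerivAt φ φd s := by
    have hmul : HasDerivAt (fun t : ℝ => t * Real.log t) (Real.log s + 1) s := by
      have := (hasDerivAt_id s).mul (Real.hasDerivAt_log hs0.ne')
      refine this.congr_deriv ?_
      field_simp
      simp only [id]; ring
    exact (hmul.inv hsl_ne).const_mul 2
  have hc : HasFDerivAt (fun y : E2 => φ (‖y‖ ^ 2)) (φd • (2 • (innerSL ℝ x))) x :=
    by have := hφ.comp_hasFDerivAt x hq; exact this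
  set L : E2 →L[ℝ] E2 :=
    φ (‖x‖ ^ 2) • ContinuousLinearMap.id ℝ E2 + (φd • (2 • (innerSL ℝ x))).smulRight x with hL
  have hGd : HasFDerivAt G L x := by
    rw [hG_eq]
    exact hc.smul (hasFDerivAt_id x)
  have hx2 : x 0 * x 0 + x 1 * x 1 = r ^ 2 := by
    have h1 : ⟪x, x⟫ = ‖x‖ ^ 2 := real_inner_self_eq_norm_sq x
    rw [PiLp.inner_apply] at h1
    simp [Fin.sum_univ_two] at h1
    rw [hr, ← h1]; ring
  have hLi : ∀ i : Fin 2, L (EuclideanSpace.single i (1 : ℝ)) i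
      = φ (r ^ 2) + φd * (2 * x i) * x i := by
    intro i
    simp [hL, ContinuousLinearMap.smul_apply, ContinuousLinearMap.smulRight_apply,
      EuclideanSpace.inner_single_right, real_inner_comm, smul_eq_mul, mul_comm, mul_assoc,
      mul_left_comm]
    rfl
  have key : 2 * φ (r ^ 2) + φd * 2 * r ^ 2 = -(r ^ 2 * Real.log r ^ 2)⁻¹ := by
    rw [hφdef]
    simp only
    rw [hφd, hlogs, hs]
    field_simp
    ring
  have htrace : (∑ i, L (EuclideanSpace.single i (1 : ℝ)) i)
      = -(r ^ 2 * Real.log r ^ 2)⁻¹ := by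
    rw [Fin.sum_univ_two, hLi 0, hLi 1, ← key]
    linear_combination 2 * φd * hx2
  refine ⟨?_, L, hGd, htrace, ?_⟩
  · -- gradient statement
    have huu_eq : uu = fun y : E2 => Real.log (-(Real.log (‖y‖ ^ 2) / 2)) := by
      funext y
      unfold uu
      congr 1
      rw [Real.log_pow]; push_cast; ring
    have hpos : 0 < -(Real.log s / 2) := by rw [hlogs]; linarith
    have hinner : HasDerivAt (fun t : ℝ => -(Real.log t / 2)) (-(s⁻¹ / 2)) s :=
      ((Real.hasDerivAt_log hs0.ne').div_const 2).neg
    have hψ : HasDerivAt (fun t : ℝ => Real.log (-(Real.log t / 2))) ((s * Real.log s)⁻¹) s := by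
      have := (Real.hasDerivAt_log (ne_of_gt hpos)).comp s hinner
      refine this.congr_deriv ?_
      field_simp
    have hud : HasFDerivAt uu (((s * Real.log s)⁻¹) • (2 • (innerSL ℝ x))) x := by
      rw [huu_eq]
      exact hψ.comp_hasFDerivAt x hq
    rw [hasGradientAt_iff_hasFDerivAt]
    refine hud.congr_fderiv ?_
    ext y
    simp only [InnerProductSpace.toDual_apply_apply, G, real_inner_smul_left,
      ContinuousLinearMap.smul_apply, innerSL_apply_apply, smul_eq_mul, nsmul_eq_mul]
    rw [← hr, ← hs, hlogs]
    field_simp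
    ring
  · -- final identity
    have hbg : ⟪bb x, G x⟫ = -((r ^ 2 * Real.log r)⁻¹ * ((r ^ 2 * Real.log r)⁻¹ * r ^ 2)) := by
      unfold bb G
      rw [neg_smul, inner_neg_left, real_inner_smul_left, real_inner_smul_right,
        real_inner_self_eq_norm_sq, ← hr]
    rw [htrace, hbg]
    field_simp
    ring
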